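/- Let F = K ⊕ ℚ be the pseudo-cubic field attached to a positive non-square discriminant D, let I ⊂ F be a lattice with ℤ-basis (r₁,r₂,r₃), and let (s₁,s₂,s₃) be the dual basis of I^∨ with respect to the pseudo-trace pairing, i.e. tr_p(s_i·r_j) = δ_{ij}. Equip F⊗_ℚF with the pairing determined by ⟨x₁⊗x₂, y₁⊗y₂⟩ = tr_p(x₁y₁)·tr_p(x₂y₂), let Sym_ℚ(F) be the symmetric tensors, and let Λ₁ = {λ ∈ F⊗_ℚF : x·λ = λ·x for all x ∈ F}. Then the three symmetric tensors s₁⊗s₂ + s₂⊗s₁, s₁⊗s₃ + s₃⊗s₁, s₂⊗s₃ + s₃⊗s₂ form a ℚ-basis of N := {a ∈ Sym_ℚ(F) : ⟨a, r_i⊗r_i⟩ = 0 for i = 1,2,3}. Moreover, an element a = a₁·(s₂⊗s₃ + s₃⊗s₂) + a₂·(s₁⊗s₃ + s₃⊗s₁) + a₃·(s₁⊗s₂ + s₂⊗s₁) of N satisfies ⟨a, λ⟩ = 0 for all λ ∈ Λ₁ if and only if a₁·s₂s₃ + a₂·s₁s₃ + a₃·s₁s₂ = 0 in F. -/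

import Mathlib

open scoped TensorProduct

/-- The subspace `Sym_ℚ(F)` of symmetric tensors in `F ⊗_ℚ F`. -/
def symSub (F : Type) [AddCommGroup F] [Module ℚ F] : Submodule ℚ (F ⊗[ℚ] F) where
  carrier := {t | (TensorProduct.comm ℚ F F) t = t}
  add_mem' := by
    intro a b ha hb
    simp only [Set.mem_setOf_eq, map_add] at *
    rw [ha, hb]
  zero_mem' := by simp
  smul_mem' := by
    intro c a ha
    simp only [Set.mem_setOf_eq, map_smul] at *
    rw [ha]

/-- The submodule `Λ₁ = {λ ∈ F ⊗_ℚ F : x·λ = λ·x for all x ∈ F}`. -/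
def lambdaOne (F : Type) [CommRing F] [Algebra ℚ F] : Submodule ℚ (F ⊗[ℚ] F) where
  carrier := {t | ∀ x : F, LinearMap.rTensor F (LinearMap.mulLeft ℚ x) t
      = LinearMap.lTensor F (LinearMap.mulLeft ℚ x) t}
  add_mem' := by
    intro a b ha hb x
    simp only [map_add, ha x, hb x]
  zero_mem' := by intro x; simp
  smul_mem' := by
    intro c a ha x
    simp only [map_smul, ha x]

/-- The space `N = {a ∈ Sym_ℚ(F) : ⟨a, rᵢ ⊗ rᵢ⟩ = 0 for i = 1,2,3}`. -/
def nSub (F : Type) [CommRing F] [Algebra ℚ F]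
    (B : (F ⊗[ℚ] F) →ₗ[ℚ] (F ⊗[ℚ] F) →ₗ[ℚ] ℚ) (r : Fin 3 → F) :
    Submodule ℚ (F ⊗[ℚ] F) where
  carrier := {t | t ∈ symSub F ∧ ∀ i : Fin 3, B t (r i ⊗ₜ[ℚ] r i) = 0}
  add_mem' := by
    rintro a b ⟨ha1, ha2⟩ ⟨hb1, hb2⟩
    refine ⟨(symSub F).add_mem ha1 hb1, fun i => ?_⟩
    simp only [map_add, LinearMap.add_apply, ha2 i, hb2 i, add_zero]
  zero_mem' := ⟨(symSub F).zero_mem, by intro i; simp⟩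
  smul_mem' := by
    rintro c a ⟨ha1, ha2⟩
    refine ⟨(symSub F).smul_mem c ha1, fun i => ?_⟩
    simp only [map_smul, LinearMap.smul_apply, ha2 i, smul_zero]

section AuxSec
open LinearMap

section Aux
variable {F : Type} [CommRing F] [Algebra ℚ F]
variable (Tp : F →ₗ[ℚ] ℚ)
variable (B : (F ⊗[ℚ] F) →ₗ[ℚ] (F ⊗[ℚ] F) →ₗ[ℚ] ℚ)
variable (rb : Module.Basis (Fin 3) ℚ F) (r s : Fin 3 → F)

/-- coordinates w.r.t. rb are given by pairing with s. -/
theorem aux_repr (hr : ∀ i, r i = rb i)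
    (hs : ∀ i j, Tp (s i * r j) = if i = j then 1 else 0)
    (w : F) (j : Fin 3) : rb.repr w j = Tp (s j * w) := by
  have h1 : Tp (s j * w) = ∑ i, rb.repr w i * Tp (s j * r i) := by
    conv_lhs => rw [← rb.sum_repr w]
    rw [Finset.mul_sum, map_sum]
    refine Finset.sum_congr rfl fun i _ => ?_
    rw [mul_smul_comm, map_smul, hr, smul_eq_mul]
  rw [h1]
  have h2 : ∀ i : Fin 3, Tp (s j * r i) = if i = j then 1 else 0 := by
    intro i; rw [hs]; simp [eq_comm]
  simp [h2]

theorem aux_expand (hr : ∀ i, r i = rb i)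
    (hs : ∀ i j, Tp (s i * r j) = if i = j then 1 else 0)
    (w : F) : w = ∑ j, Tp (s j * w) • r j := by
  conv_lhs => rw [← rb.sum_repr w]
  refine Finset.sum_congr rfl fun j _ => ?_
  rw [aux_repr Tp rb r s hr hs, hr]

theorem aux_coordzero (hr : ∀ i, r i = rb i)
    (hs : ∀ i j, Tp (s i * r j) = if i = j then 1 else 0)
    (w : F) (h : ∀ j, Tp (s j * w) = 0) : w = 0 := by
  rw [aux_expand Tp rb r s hr hs w]
  simp [h]

/-- Tp (w * y) expansion -/
theorem aux_Tpmul (hr : ∀ i, r i = rb i)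
    (hs : ∀ i j, Tp (s i * r j) = if i = j then 1 else 0)
    (w y : F) : Tp (w * y) = ∑ k, Tp (s k * w) * Tp (r k * y) := by
  conv_lhs => rw [aux_expand Tp rb r s hr hs w, Finset.sum_mul, map_sum]
  refine Finset.sum_congr rfl fun k _ => ?_
  rw [smul_mul_assoc, map_smul, smul_eq_mul]

end Aux

section Aux2
variable {F : Type} [CommRing F] [Algebra ℚ F]
variable (Tp : F →ₗ[ℚ] ℚ)
variable (B : (F ⊗[ℚ] F) →ₗ[ℚ] (F ⊗[ℚ] F) →ₗ[ℚ] ℚ)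
variable (rb : Module.Basis (Fin 3) ℚ F) (r s : Fin 3 → F)

theorem aux_s_li (hs : ∀ i j, Tp (s i * r j) = if i = j then 1 else 0) :
    LinearIndependent ℚ s := by
  rw [Fintype.linearIndependent_iff]
  intro g hg j
  have h1 : Tp ((∑ i, g i • s i) * r j) = g j := by
    rw [Finset.sum_mul, map_sum]
    have : ∀ i : Fin 3, Tp ((g i • s i) * r j) = g i * (if i = j then 1 else 0) := by
      intro i; rw [smul_mul_assoc, map_smul, hs, smul_eq_mul]
    simp [hs]
  rw [hg] at h1
  simpa using h1.symm

noncomputable def auxSB (hs : ∀ i j, Tp (s i * r j) = if i = j then 1 else 0) :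
    Module.Basis (Fin 3) ℚ F :=
  haveI : Module.Finite ℚ F := Module.Finite.of_basis rb
  basisOfLinearIndependentOfCardEqFinrank (aux_s_li Tp r s hs)
    (by rw [Module.finrank_eq_card_basis rb])

theorem auxSB_apply (hs : ∀ i j, Tp (s i * r j) = if i = j then 1 else 0) (i : Fin 3) :
    auxSB Tp rb r s hs i = s i := by
  simp [auxSB, coe_basisOfLinearIndependentOfCardEqFinrank]

noncomputable def auxSTB (hs : ∀ i j, Tp (s i * r j) = if i = j then 1 else 0) :
    Module.Basis (Fin 3 × Fin 3) ℚ (F ⊗[ℚ] F) :=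
  (auxSB Tp rb r s hs).tensorProduct (auxSB Tp rb r s hs)

theorem aux_hcoord
    (hB : ∀ x₁ x₂ y₁ y₂ : F, B (x₁ ⊗ₜ[ℚ] x₂) (y₁ ⊗ₜ[ℚ] y₂) = Tp (x₁ * y₁) * Tp (x₂ * y₂))
    (hs : ∀ i j, Tp (s i * r j) = if i = j then 1 else 0)
    (t : F ⊗[ℚ] F) (p : Fin 3 × Fin 3) :
    (auxSTB Tp rb r s hs).repr t p = B t (r p.1 ⊗ₜ[ℚ] r p.2) := by
  set stb := auxSTB Tp rb r s hs with hstb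
  have key : stb.coord p = B.flip (r p.1 ⊗ₜ[ℚ] r p.2) := by
    refine Module.Basis.ext stb fun q => ?_
    have h1 : stb q = s q.1 ⊗ₜ[ℚ] s q.2 := by
      rw [hstb]
      show (auxSB Tp rb r s hs).tensorProduct (auxSB Tp rb r s hs) q = _
      obtain ⟨a, b⟩ := q
      rw [Module.Basis.tensorProduct_apply, auxSB_apply, auxSB_apply]
    rw [Module.Basis.coord_apply, Module.Basis.repr_self, h1, flip_apply, hB, hs, hs,
      Finsupp.single_apply]
    obtain ⟨a, b⟩ := q
    by_cases h1 : a = p.1 <;> by_cases h2 : b = p.2 <;>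
      simp [h1, h2, Prod.ext_iff]
  have := congrFun (congrArg (fun f => f.toFun) key) t
  simpa [Module.Basis.coord_apply] using this

include rb in
theorem aux_heq
    (hB : ∀ x₁ x₂ y₁ y₂ : F, B (x₁ ⊗ₜ[ℚ] x₂) (y₁ ⊗ₜ[ℚ] y₂) = Tp (x₁ * y₁) * Tp (x₂ * y₂))
    (hs : ∀ i j, Tp (s i * r j) = if i = j then 1 else 0)
    (t₁ t₂ : F ⊗[ℚ] F)
    (h : ∀ i j : Fin 3, B t₁ (r i ⊗ₜ[ℚ] r j) = B t₂ (r i ⊗ₜ[ℚ] r j)) : t₁ = t₂ := by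
  apply (auxSTB Tp rb r s hs).repr.injective
  ext p
  rw [aux_hcoord Tp B rb r s hB hs, aux_hcoord Tp B rb r s hB hs, h]

theorem aux_comm
    (hB : ∀ x₁ x₂ y₁ y₂ : F, B (x₁ ⊗ₜ[ℚ] x₂) (y₁ ⊗ₜ[ℚ] y₂) = Tp (x₁ * y₁) * Tp (x₂ * y₂))
    (t : F ⊗[ℚ] F) (y₁ y₂ : F) :
    B ((TensorProduct.comm ℚ F F) t) (y₁ ⊗ₜ[ℚ] y₂) = B t (y₂ ⊗ₜ[ℚ] y₁) := by
  induction t with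
  | zero => simp
  | tmul x₁ x₂ => rw [TensorProduct.comm_tmul, hB, hB]; ring
  | add u v hu hv => simp only [map_add, LinearMap.add_apply, hu, hv]

theorem aux_adj_l
    (hB : ∀ x₁ x₂ y₁ y₂ : F, B (x₁ ⊗ₜ[ℚ] x₂) (y₁ ⊗ₜ[ℚ] y₂) = Tp (x₁ * y₁) * Tp (x₂ * y₂))
    (x : F) (t l : F ⊗[ℚ] F) :
    B (lTensor F (mulLeft ℚ x) t) l = B t (lTensor F (mulLeft ℚ x) l) := by
  induction t with
  | zero => simp
  | tmul y₁ y₂ =>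
      induction l with
      | zero => simp
      | tmul z₁ z₂ =>
          rw [lTensor_tmul, lTensor_tmul, hB, hB, mulLeft_apply, mulLeft_apply]
          ring_nf
      | add u v hu hv => simp only [map_add, hu, hv]
  | add u v hu hv => simp only [map_add, LinearMap.add_apply, hu, hv]

theorem aux_adj_r
    (hB : ∀ x₁ x₂ y₁ y₂ : F, B (x₁ ⊗ₜ[ℚ] x₂) (y₁ ⊗ₜ[ℚ] y₂) = Tp (x₁ * y₁) * Tp (x₂ * y₂))
    (x : F) (t l : F ⊗[ℚ] F) :
    B (rTensor F (mulLeft ℚ x) t) l = B t (rTensor F (mulLeft ℚ x) l) := by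
  induction t with
  | zero => simp
  | tmul y₁ y₂ =>
      induction l with
      | zero => simp
      | tmul z₁ z₂ =>
          rw [rTensor_tmul, rTensor_tmul, hB, hB, mulLeft_apply, mulLeft_apply]
          ring_nf
      | add u v hu hv => simp only [map_add, hu, hv]
  | add u v hu hv => simp only [map_add, LinearMap.add_apply, hu, hv]

end Aux2


set_option maxHeartbeats 1000000 in
/-- for a ℤ-basis `(r₁,r₂,r₃)` of a lattice in the pseudo-cubic field
`F = K ⊕ ℚ` with dual basis `(s₁,s₂,s₃)` for the pseudo-trace pairing, the symmetrized
tensors `sᵢ⊗sⱼ + sⱼ⊗sᵢ` form a basis of `N`, and such an element annihilates `Λ₁` iff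
`a₁s₂s₃ + a₂s₁s₃ + a₃s₁s₂ = 0` in `F`. -/
theorem stmt_19 (D : ℕ) (hD0 : 0 < D) (hDns : ¬ IsSquare D)
    (hDmod : D % 4 = 0 ∨ D % 4 = 1)
    (K : Type) [Field K] [CharZero K]
    (sqrtD : K) (hsq : sqrtD ^ 2 = (D : K))
    (hgen : ∀ x : K, ∃ a b : ℚ, x = (a : K) + (b : K) * sqrtD)
    (σ : K →+* K) (hσ : σ sqrtD = -sqrtD)
    (Tp : (K × ℚ) →ₗ[ℚ] ℚ)
    (hTp : ∀ p : K × ℚ, ((Tp p : ℚ) : K) = p.1 + σ p.1 + ((p.2 : ℚ) : K))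
    (B : ((K × ℚ) ⊗[ℚ] (K × ℚ)) →ₗ[ℚ] ((K × ℚ) ⊗[ℚ] (K × ℚ)) →ₗ[ℚ] ℚ)
    (hB : ∀ x₁ x₂ y₁ y₂ : K × ℚ,
      B (x₁ ⊗ₜ[ℚ] x₂) (y₁ ⊗ₜ[ℚ] y₂) = Tp (x₁ * y₁) * Tp (x₂ * y₂))
    (rb : Module.Basis (Fin 3) ℚ (K × ℚ)) (r : Fin 3 → K × ℚ) (hr : ∀ i, r i = rb i)
    (I : Submodule ℤ (K × ℚ)) (hI : I = Submodule.span ℤ (Set.range r))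
    (s : Fin 3 → K × ℚ)
    (hs : ∀ i j : Fin 3, Tp (s i * r j) = if i = j then 1 else 0) :
    (∃ bN : Module.Basis (Fin 3) ℚ ↥(nSub (K × ℚ) B r),
      (bN 0 : (K × ℚ) ⊗[ℚ] (K × ℚ)) = s 0 ⊗ₜ[ℚ] s 1 + s 1 ⊗ₜ[ℚ] s 0 ∧
      (bN 1 : (K × ℚ) ⊗[ℚ] (K × ℚ)) = s 0 ⊗ₜ[ℚ] s 2 + s 2 ⊗ₜ[ℚ] s 0 ∧
      (bN 2 : (K × ℚ) ⊗[ℚ] (K × ℚ)) = s 1 ⊗ₜ[ℚ] s 2 + s 2 ⊗ₜ[ℚ] s 1) ∧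
    (∀ a₁ a₂ a₃ : ℚ,
      ((∀ l ∈ lambdaOne (K × ℚ),
          B (a₁ • (s 1 ⊗ₜ[ℚ] s 2 + s 2 ⊗ₜ[ℚ] s 1)
              + a₂ • (s 0 ⊗ₜ[ℚ] s 2 + s 2 ⊗ₜ[ℚ] s 0)
              + a₃ • (s 0 ⊗ₜ[ℚ] s 1 + s 1 ⊗ₜ[ℚ] s 0)) l = 0) ↔
        a₁ • (s 1 * s 2) + a₂ • (s 0 * s 2) + a₃ • (s 0 * s 1) = 0)) := by

  classical
  -- the three symmetrized tensors
  set w : Fin 3 → (K × ℚ) ⊗[ℚ] (K × ℚ) :=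
    ![s 0 ⊗ₜ[ℚ] s 1 + s 1 ⊗ₜ[ℚ] s 0,
      s 0 ⊗ₜ[ℚ] s 2 + s 2 ⊗ₜ[ℚ] s 0,
      s 1 ⊗ₜ[ℚ] s 2 + s 2 ⊗ₜ[ℚ] s 1] with hw
  have hwmem : ∀ m, w m ∈ nSub (K × ℚ) B r := by
    intro m
    refine ⟨?_, ?_⟩
    · show (TensorProduct.comm ℚ _ _) (w m) = w m
      fin_cases m <;> simp [hw, TensorProduct.comm_tmul, add_comm]
    · intro i
      fin_cases m <;> fin_cases i <;>
        simp [hw, hB, hs, map_add, LinearMap.add_apply]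
  set v : Fin 3 → ↥(nSub (K × ℚ) B r) := fun m => ⟨w m, hwmem m⟩ with hv
  have hsymm : ∀ t : (K × ℚ) ⊗[ℚ] (K × ℚ), (TensorProduct.comm ℚ _ _) t = t →
      ∀ i j, B t (r i ⊗ₜ[ℚ] r j) = B t (r j ⊗ₜ[ℚ] r i) := by
    intro t ht i j
    conv_lhs => rw [← ht]
    rw [aux_comm Tp B hB]
  have hli : LinearIndependent ℚ v := by
    rw [Fintype.linearIndependent_iff]
    intro g hg
    have hg' : ∑ m, g m • w m = 0 := by
      have h := congrArg (Subtype.val) hg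
      simpa only [hv, AddSubmonoidClass.coe_finset_sum, SetLike.val_smul,
        ZeroMemClass.coe_zero] using h
    intro m
    fin_cases m
    · have := congrArg (fun t => B t (r 0 ⊗ₜ[ℚ] r 1)) hg'
      simpa [hw, Fin.sum_univ_three, hB, hs, map_add, LinearMap.add_apply] using this
    · have := congrArg (fun t => B t (r 0 ⊗ₜ[ℚ] r 2)) hg'
      simpa [hw, Fin.sum_univ_three, hB, hs, map_add, LinearMap.add_apply] using this
    · have := congrArg (fun t => B t (r 1 ⊗ₜ[ℚ] r 2)) hg'
      simpa [hw, Fin.sum_univ_three, hB, hs, map_add, LinearMap.add_apply] using this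
  have hsp : ⊤ ≤ Submodule.span ℚ (Set.range v) := by
    rintro ⟨t, htsym, htz⟩ -
    rw [Submodule.mem_span_range_iff_exists_fun]
    refine ⟨![B t (r 0 ⊗ₜ[ℚ] r 1), B t (r 0 ⊗ₜ[ℚ] r 2), B t (r 1 ⊗ₜ[ℚ] r 2)], ?_⟩
    apply Subtype.ext
    have hcoe : ((∑ i, (![B t (r 0 ⊗ₜ[ℚ] r 1), B t (r 0 ⊗ₜ[ℚ] r 2),
        B t (r 1 ⊗ₜ[ℚ] r 2)]) i • v i : ↥(nSub (K × ℚ) B r)) :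
        (K × ℚ) ⊗[ℚ] (K × ℚ)) = ∑ i, (![B t (r 0 ⊗ₜ[ℚ] r 1), B t (r 0 ⊗ₜ[ℚ] r 2),
        B t (r 1 ⊗ₜ[ℚ] r 2)]) i • w i := by
      simp [hv]
    rw [hcoe]
    refine aux_heq Tp B rb r s hB hs _ _ fun i j => ?_
    have hsy := hsymm t htsym
    fin_cases i <;> fin_cases j <;>
      simp only [hw, Fin.sum_univ_three, Matrix.cons_val_zero, Matrix.cons_val_one,
        Matrix.head_cons, Matrix.cons_val_two, Matrix.tail_cons, map_add, map_smul,
        LinearMap.add_apply, LinearMap.smul_apply, hB, hs, smul_eq_mul, Fin.ext_iff] <;>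
      norm_num
    all_goals
      try simp only [show (⟨0, by omega⟩ : Fin 3) = 0 from rfl,
        show (⟨1, by omega⟩ : Fin 3) = 1 from rfl,
        show (⟨2, by omega⟩ : Fin 3) = 2 from rfl]
    all_goals first
      | exact (htz 0).symm | exact (htz 1).symm | exact (htz 2).symm
      | exact hsy 0 1 | exact hsy 0 2 | exact hsy 1 2
  constructor
  · refine ⟨Module.Basis.mk hli hsp, ?_, ?_, ?_⟩ <;>
      rw [Module.Basis.mk_apply] <;> simp [hv, hw]
  · intro a₁ a₂ a₃
    set a : (K × ℚ) ⊗[ℚ] (K × ℚ) :=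
      a₁ • (s 1 ⊗ₜ[ℚ] s 2 + s 2 ⊗ₜ[ℚ] s 1) + a₂ • (s 0 ⊗ₜ[ℚ] s 2 + s 2 ⊗ₜ[ℚ] s 0)
        + a₃ • (s 0 ⊗ₜ[ℚ] s 1 + s 1 ⊗ₜ[ℚ] s 0) with ha
    set μ : K × ℚ := a₁ • (s 1 * s 2) + a₂ • (s 0 * s 2) + a₃ • (s 0 * s 1) with hμdef
    constructor
    · -- forward
      intro H
      set e : (K × ℚ) ⊗[ℚ] (K × ℚ) := ∑ k, r k ⊗ₜ[ℚ] s k with he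
      have hre : ∀ x : K × ℚ, LinearMap.rTensor (K × ℚ) (LinearMap.mulLeft ℚ x) e
          = ∑ k, (x * r k) ⊗ₜ[ℚ] s k := by
        intro x
        rw [he, map_sum]
        exact Finset.sum_congr rfl fun k _ => by
          rw [LinearMap.rTensor_tmul, LinearMap.mulLeft_apply]
      have hle : ∀ x : K × ℚ, LinearMap.lTensor (K × ℚ) (LinearMap.mulLeft ℚ x) e
          = ∑ k, r k ⊗ₜ[ℚ] (x * s k) := by
        intro x
        rw [he, map_sum]
        exact Finset.sum_congr rfl fun k _ => by
          rw [LinearMap.lTensor_tmul, LinearMap.mulLeft_apply]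
      have key2 : ∀ x : K × ℚ, LinearMap.rTensor (K × ℚ) (LinearMap.mulLeft ℚ x) e
          = LinearMap.lTensor (K × ℚ) (LinearMap.mulLeft ℚ x) e := by
        intro x
        refine aux_heq Tp B rb r s hB hs _ _ fun i j => ?_
        rw [hre, hle, map_sum, map_sum, LinearMap.sum_apply, LinearMap.sum_apply]
        have hL : ∑ k, B ((x * r k) ⊗ₜ[ℚ] s k) (r i ⊗ₜ[ℚ] r j)
            = Tp ((x * r j) * r i) := by
          have : ∀ k : Fin 3, B ((x * r k) ⊗ₜ[ℚ] s k) (r i ⊗ₜ[ℚ] r j)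
              = Tp (x * r k * r i) * (if k = j then 1 else 0) := by
            intro k; rw [hB, hs]
          simp [this]
        rw [hL]
        have hR : Tp ((x * r j) * r i)
            = ∑ k, Tp (s k * (x * r j)) * Tp (r k * r i) :=
          aux_Tpmul Tp rb r s hr hs (x * r j) (r i)
        rw [hR]
        refine Finset.sum_congr rfl fun k _ => ?_
        rw [hB, show s k * (x * r j) = (x * s k) * r j by ring]
        ring
      have hlam : ∀ x : K × ℚ,
          LinearMap.rTensor (K × ℚ) (LinearMap.mulLeft ℚ x) e ∈ lambdaOne (K × ℚ) := by
        intro x y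
        show LinearMap.rTensor (K × ℚ) (LinearMap.mulLeft ℚ y)
            (LinearMap.rTensor (K × ℚ) (LinearMap.mulLeft ℚ x) e) = _
        rw [← LinearMap.rTensor_comp_apply, ← LinearMap.mulLeft_mul, key2 (y * x),
          LinearMap.mulLeft_mul, LinearMap.lTensor_comp_apply, ← key2 x]
      have hBse : ∀ (x : K × ℚ) (i j : Fin 3),
          B (s i ⊗ₜ[ℚ] s j) (LinearMap.rTensor (K × ℚ) (LinearMap.mulLeft ℚ x) e)
          = Tp (x * (s i * s j)) := by
        intro x i j
        rw [hre, map_sum]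
        have hR : Tp (x * (s i * s j)) = Tp (s j * (s i * x)) := by ring_nf
        rw [hR, aux_Tpmul Tp rb r s hr hs (s j) (s i * x)]
        refine Finset.sum_congr rfl fun k _ => ?_
        rw [hB, show s i * (x * r k) = r k * (s i * x) by ring,
          show s j * s k = s k * s j by ring]
        ring
      have htpxμ : ∀ x : K × ℚ, Tp (x * μ) = 0 := by
        intro x
        have h0 := H _ (hlam x)
        rw [ha] at h0
        simp only [map_add, map_smul, LinearMap.add_apply, LinearMap.smul_apply,
          hBse, smul_eq_mul] at h0
        have hexp : Tp (x * μ) = a₁ * Tp (x * (s 1 * s 2)) + a₂ * Tp (x * (s 0 * s 2))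
            + a₃ * Tp (x * (s 0 * s 1)) := by
          rw [hμdef]
          have : x * (a₁ • (s 1 * s 2) + a₂ • (s 0 * s 2) + a₃ • (s 0 * s 1))
              = a₁ • (x * (s 1 * s 2)) + a₂ • (x * (s 0 * s 2)) + a₃ • (x * (s 0 * s 1)) := by
            rw [mul_add, mul_add, mul_smul_comm, mul_smul_comm, mul_smul_comm]
          rw [this, map_add, map_add, map_smul, map_smul, map_smul,
            smul_eq_mul, smul_eq_mul, smul_eq_mul]
        rw [hexp]
        have h21 : s 2 * s 1 = s 1 * s 2 := mul_comm _ _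
        have h20 : s 2 * s 0 = s 0 * s 2 := mul_comm _ _
        have h10 : s 1 * s 0 = s 0 * s 1 := mul_comm _ _
        rw [h21, h20, h10] at h0
        linarith
      refine aux_coordzero Tp rb r s hr hs μ fun j => ?_
      rw [show s j * μ = μ * s j by ring, show (μ * s j : K × ℚ) = s j * μ by ring]
      have := htpxμ (s j)
      rwa [show (s j * μ : K × ℚ) = s j * μ from rfl] at this
    · -- backward
      intro hμ l hl
      have hl' : ∀ x : K × ℚ, LinearMap.rTensor (K × ℚ) (LinearMap.mulLeft ℚ x) l
          = LinearMap.lTensor (K × ℚ) (LinearMap.mulLeft ℚ x) l := hl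
      have key3 : ∀ u x : K × ℚ, B (u ⊗ₜ[ℚ] x) l = B ((u * x) ⊗ₜ[ℚ] 1) l := by
        intro u x
        have h1 : (u ⊗ₜ[ℚ] x : (K × ℚ) ⊗[ℚ] (K × ℚ))
            = LinearMap.lTensor (K × ℚ) (LinearMap.mulLeft ℚ x) (u ⊗ₜ[ℚ] 1) := by
          rw [LinearMap.lTensor_tmul, LinearMap.mulLeft_apply, mul_one]
        rw [h1, aux_adj_l Tp B hB, ← hl', ← aux_adj_r Tp B hB,
          LinearMap.rTensor_tmul, LinearMap.mulLeft_apply, mul_comm x u]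
      have hz : B (μ ⊗ₜ[ℚ] (1 : K × ℚ)) l = a₁ * B ((s 1 * s 2) ⊗ₜ[ℚ] 1) l
          + a₂ * B ((s 0 * s 2) ⊗ₜ[ℚ] 1) l + a₃ * B ((s 0 * s 1) ⊗ₜ[ℚ] 1) l := by
        rw [hμdef]
        simp only [TensorProduct.add_tmul, ← TensorProduct.smul_tmul', map_add,
          LinearMap.add_apply, map_smul, LinearMap.smul_apply, smul_eq_mul]
      rw [hμ] at hz
      simp only [TensorProduct.zero_tmul, map_zero, LinearMap.zero_apply] at hz
      rw [ha]
      simp only [map_add, map_smul, LinearMap.add_apply, LinearMap.smul_apply, smul_eq_mul]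
      rw [key3 (s 1) (s 2), key3 (s 2) (s 1), key3 (s 0) (s 2), key3 (s 2) (s 0),
        key3 (s 0) (s 1), key3 (s 1) (s 0), mul_comm (s 2) (s 1), mul_comm (s 2) (s 0),
        mul_comm (s 1) (s 0)]
      linarith
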